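/- Let A be an associative ℂ-algebra with an element E, let N be an A-bimodule spanned by two elements x, y satisfying E·x − x·E = y and E·y − y·E = x, and let U = ℂv be a one-dimensional left A-module with E·v = (1/2)v. Then every A-module homomorphism f: N ⊗_A U → U is zero; whereas if instead W = ℂw is a one-dimensional left A-module with E·w = −(1/2)w, the space of A-module homomorphisms N ⊗_A U → W is at most one-dimensional, cut out by the condition f(y ⊗ v) = −f(x ⊗ v). -/
import Mathlib


open TensorProduct MulOpposite

/-- Scalars from `ℂ` commute with the `A`-action. -/
lemma fusion_aux_smul_comm {A : Type*} [Ring A] [Algebra ℂ A]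
    {M : Type*} [AddCommGroup M] [Module ℂ M] [Module A M] [IsScalarTower ℂ A M]
    (a : A) (c : ℂ) (m : M) : a • (c • m) = c • (a • m) := by
  rw [← smul_one_smul A c m, ← mul_smul, mul_smul_comm, mul_one, smul_assoc]

/-- If a balanced `A`-linear map vanishes on `x ⊗ v` and `y ⊗ v`, it vanishes. -/
lemma fusion_vanish {A : Type*} [Ring A] [Algebra ℂ A]
    {N : Type*} [AddCommGroup N] [Module ℂ N] [Module A N] [Module Aᵐᵒᵖ N]
    [IsScalarTower ℂ A N] [IsScalarTower ℂ Aᵐᵒᵖ N]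
    {U M : Type*} [AddCommGroup U] [Module ℂ U] [Module A U] [IsScalarTower ℂ A U]
    [AddCommGroup M] [Module ℂ M] [Module A M] [IsScalarTower ℂ A M]
    (x y : N)
    (hspan : Submodule.span ℂ
        {n : N | ∃ a b : A, n = a • ((op b) • x) ∨ n = a • ((op b) • y)} = ⊤)
    (v : U) (hv : ∀ u : U, ∃ c : ℂ, u = c • v)
    (f : N ⊗[ℂ] U →ₗ[ℂ] M)
    (hbal : ∀ (a : A) (n : N) (u : U), f (((op a) • n) ⊗ₜ[ℂ] u) = f (n ⊗ₜ[ℂ] (a • u)))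
    (hlin : ∀ (a : A) (n : N) (u : U), f ((a • n) ⊗ₜ[ℂ] u) = a • f (n ⊗ₜ[ℂ] u))
    (hfx : f (x ⊗ₜ[ℂ] v) = 0) (hfy : f (y ⊗ₜ[ℂ] v) = 0) : f = 0 := by
  let S : Submodule ℂ N :=
    { carrier := {n : N | ∀ u : U, f (n ⊗ₜ[ℂ] u) = 0}
      add_mem' := by
        intro n m hn hm u
        rw [TensorProduct.add_tmul, map_add, hn, hm, add_zero]
      zero_mem' := by
        intro u
        rw [TensorProduct.zero_tmul, map_zero]
      smul_mem' := by
        intro c n hn u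
        rw [← TensorProduct.smul_tmul', map_smul, hn, smul_zero] }
  have hsub : {n : N | ∃ a b : A, n = a • ((op b) • x) ∨ n = a • ((op b) • y)} ⊆ S := by
    rintro n ⟨a, b, h | h⟩ <;> subst h <;> intro u <;> obtain ⟨c, rfl⟩ := hv u
    · have h1 : f ((a • ((op b) • x)) ⊗ₜ[ℂ] v) = 0 := by
        obtain ⟨c', hc'⟩ := hv (b • v)
        rw [hlin, hbal, hc', TensorProduct.tmul_smul, map_smul, hfx, smul_zero, smul_zero]
      rw [TensorProduct.tmul_smul, map_smul, h1, smul_zero]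
    · have h1 : f ((a • ((op b) • y)) ⊗ₜ[ℂ] v) = 0 := by
        obtain ⟨c', hc'⟩ := hv (b • v)
        rw [hlin, hbal, hc', TensorProduct.tmul_smul, map_smul, hfy, smul_zero, smul_zero]
      rw [TensorProduct.tmul_smul, map_smul, h1, smul_zero]
  have hStop : S = ⊤ := top_unique (hspan ▸ Submodule.span_le.mpr hsub)
  refine TensorProduct.ext' fun n u => ?_
  have hn : n ∈ S := hStop ▸ Submodule.mem_top
  exact hn u

/-- The fundamental relation from balancing. -/
lemma fusion_rel {A : Type*} [Ring A] [Algebra ℂ A]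
    {N : Type*} [AddCommGroup N] [Module ℂ N] [Module A N] [Module Aᵐᵒᵖ N]
    [IsScalarTower ℂ A N] [IsScalarTower ℂ Aᵐᵒᵖ N]
    {U M : Type*} [AddCommGroup U] [Module ℂ U] [Module A U] [IsScalarTower ℂ A U]
    [AddCommGroup M] [Module ℂ M] [Module A M] [IsScalarTower ℂ A M]
    (E : A) (v : U) (hEv : E • v = (2⁻¹ : ℂ) • v)
    (f : N ⊗[ℂ] U →ₗ[ℂ] M)
    (hbal : ∀ (a : A) (n : N) (u : U), f (((op a) • n) ⊗ₜ[ℂ] u) = f (n ⊗ₜ[ℂ] (a • u)))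
    (hlin : ∀ (a : A) (n : N) (u : U), f ((a • n) ⊗ₜ[ℂ] u) = a • f (n ⊗ₜ[ℂ] u))
    (p q : N) (hpq : E • p - (op E) • p = q) :
    f (q ⊗ₜ[ℂ] v) = E • f (p ⊗ₜ[ℂ] v) - (2⁻¹ : ℂ) • f (p ⊗ₜ[ℂ] v) := by
  conv_lhs => rw [← hpq]
  rw [TensorProduct.sub_tmul, map_sub, hlin, hbal, hEv, TensorProduct.tmul_smul, map_smul]

theorem lattice_fusion_homs (A : Type*) [Ring A] [Algebra ℂ A]
    (N : Type*) [AddCommGroup N] [Module ℂ N] [Module A N] [Module Aᵐᵒᵖ N]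
    [IsScalarTower ℂ A N] [IsScalarTower ℂ Aᵐᵒᵖ N] [SMulCommClass A Aᵐᵒᵖ N]
    (U W : Type*) [AddCommGroup U] [Module ℂ U] [Module A U] [IsScalarTower ℂ A U]
    [AddCommGroup W] [Module ℂ W] [Module A W] [IsScalarTower ℂ A W]
    (E : A) (x y : N)
    (hspan : Submodule.span ℂ
        {n : N | ∃ a b : A, n = a • ((op b) • x) ∨ n = a • ((op b) • y)} = ⊤)
    (hx : E • x - (op E) • x = y) (hy : E • y - (op E) • y = x)
    (v : U) (hv : ∀ u : U, ∃ c : ℂ, u = c • v) (hEv : E • v = (2⁻¹ : ℂ) • v)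
    (w : W) (hw : ∀ u : W, ∃ c : ℂ, u = c • w) (hEw : E • w = (-2⁻¹ : ℂ) • w) :
    (∀ f : N ⊗[ℂ] U →ₗ[ℂ] U,
      (∀ (a : A) (n : N) (u : U), f (((op a) • n) ⊗ₜ[ℂ] u) = f (n ⊗ₜ[ℂ] (a • u))) →
      (∀ (a : A) (n : N) (u : U), f ((a • n) ⊗ₜ[ℂ] u) = a • f (n ⊗ₜ[ℂ] u)) →
      f = 0) ∧
    (∀ f : N ⊗[ℂ] U →ₗ[ℂ] W,
      (∀ (a : A) (n : N) (u : U), f (((op a) • n) ⊗ₜ[ℂ] u) = f (n ⊗ₜ[ℂ] (a • u))) →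
      (∀ (a : A) (n : N) (u : U), f ((a • n) ⊗ₜ[ℂ] u) = a • f (n ⊗ₜ[ℂ] u)) →
      f (y ⊗ₜ[ℂ] v) = -f (x ⊗ₜ[ℂ] v)) ∧
    (∀ f g : N ⊗[ℂ] U →ₗ[ℂ] W,
      (∀ (a : A) (n : N) (u : U), f (((op a) • n) ⊗ₜ[ℂ] u) = f (n ⊗ₜ[ℂ] (a • u))) →
      (∀ (a : A) (n : N) (u : U), f ((a • n) ⊗ₜ[ℂ] u) = a • f (n ⊗ₜ[ℂ] u)) →
      (∀ (a : A) (n : N) (u : U), g (((op a) • n) ⊗ₜ[ℂ] u) = g (n ⊗ₜ[ℂ] (a • u))) →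
      (∀ (a : A) (n : N) (u : U), g ((a • n) ⊗ₜ[ℂ] u) = a • g (n ⊗ₜ[ℂ] u)) →
      ∃ c d : ℂ, ¬(c = 0 ∧ d = 0) ∧ ∀ z : N ⊗[ℂ] U, c • f z = d • g z) := by
  -- `E` acts as `½` on `U` and as `−½` on `W`
  have hEU : ∀ u : U, E • u = (2⁻¹ : ℂ) • u := by
    intro u; obtain ⟨c, rfl⟩ := hv u
    rw [fusion_aux_smul_comm, hEv, smul_comm]
  have hEW : ∀ u : W, E • u = (-2⁻¹ : ℂ) • u := by
    intro u; obtain ⟨c, rfl⟩ := hw u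
    rw [fusion_aux_smul_comm, hEw, smul_comm]
  refine ⟨?_, ?_, ?_⟩
  · -- Part 1: maps into U vanish
    intro f hbal hlin
    have hfy : f (y ⊗ₜ[ℂ] v) = 0 := by
      rw [fusion_rel E v hEv f hbal hlin x y hx, hEU, sub_self]
    have hfx : f (x ⊗ₜ[ℂ] v) = 0 := by
      rw [fusion_rel E v hEv f hbal hlin y x hy, hEU, sub_self]
    exact fusion_vanish x y hspan v hv f hbal hlin hfx hfy
  · -- Part 2: the sign relation
    intro f hbal hlin
    rw [fusion_rel E v hEv f hbal hlin x y hx, hEW]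
    module
  · -- Part 3: at most one dimension
    intro f g hf1 hf2 hg1 hg2
    have hfyx : f (y ⊗ₜ[ℂ] v) = -f (x ⊗ₜ[ℂ] v) := by
      rw [fusion_rel E v hEv f hf1 hf2 x y hx, hEW]
      module
    have hgyx : g (y ⊗ₜ[ℂ] v) = -g (x ⊗ₜ[ℂ] v) := by
      rw [fusion_rel E v hEv g hg1 hg2 x y hx, hEW]
      module
    obtain ⟨cf, hcf⟩ := hw (f (x ⊗ₜ[ℂ] v))
    obtain ⟨cg, hcg⟩ := hw (g (x ⊗ₜ[ℂ] v))
    -- consider the combination `cg • f − cf • g`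
    have hcomb : (cg • f - cf • g : N ⊗[ℂ] U →ₗ[ℂ] W) = 0 := by
      refine fusion_vanish x y hspan v hv _ ?_ ?_ ?_ ?_
      · intro a n u
        simp only [LinearMap.sub_apply, LinearMap.smul_apply, hf1, hg1]
      · intro a n u
        simp only [LinearMap.sub_apply, LinearMap.smul_apply, hf2, hg2,
          fusion_aux_smul_comm, smul_sub]
      · simp only [LinearMap.sub_apply, LinearMap.smul_apply, hcf, hcg,
          smul_smul, mul_comm, sub_self]
      · simp only [LinearMap.sub_apply, LinearMap.smul_apply, hfyx, hgyx, hcf, hcg,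
          smul_neg, smul_smul, mul_comm, sub_self]
    have hall : ∀ z : N ⊗[ℂ] U, cg • f z = cf • g z := by
      intro z
      have := congrFun (congrArg DFunLike.coe hcomb) z
      simpa [sub_eq_zero] using this
    by_cases hc : cg = 0 ∧ cf = 0
    · -- then f ≡ 0, take (1,0)
      refine ⟨1, 0, by simp, fun z => ?_⟩
      have hf0 : f = 0 := by
        refine fusion_vanish x y hspan v hv f hf1 hf2 ?_ ?_
        · rw [hcf, hc.2, zero_smul]
        · rw [hfyx, hcf, hc.2, zero_smul, neg_zero]
      simp [hf0]
    · exact ⟨cg, cf, fun h => hc ⟨h.1, h.2⟩, hall⟩
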